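/- arXiv:2103.14018 — 2 statements merged into one kernel-verified Lean document; each statement's English description precedes it below -/
import Mathlib

section
/- Let η and γ be Radon measures on ℝ^d with η ≠ 0 and η absolutely continuous with respect to γ. Then for η-almost every x, the total variation distance between the normalized blow-ups η_{x,t} and γ_{x,t} tends to 0 as t → ∞, where ν_{x,t} denotes the measure A ↦ ν(e^{−t}A + x)/ν(B(x, e^{−t})) on the closed unit ball. -/
open Filter MeasureTheory Metric
open scoped ENNReal Topology

/-- The normalized blow-up `ν_{x,t}` of a measure `ν` at `x` at scale `e^{-t}`:
`ν_{x,t}(A) = ν(e^{-t}A + x) / ν(B(x, e^{-t}))` for `A ⊆ B(0,1)`. -/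
noncomputable def blowUp {d : ℕ} (ν : Measure (EuclideanSpace ℝ (Fin d)))
    (x : EuclideanSpace ℝ (Fin d)) (t : ℝ) : Measure (EuclideanSpace ℝ (Fin d)) :=
  (ν (closedBall x (Real.exp (-t))))⁻¹ •
    (Measure.map (fun y => Real.exp t • (y - x)) (ν.restrict (closedBall x (Real.exp (-t)))))

/-- Total variation distance between two measures: the supremum over measurable sets
of the (symmetrized) difference of the measures. -/
noncomputable def tvDist {α : Type*} [MeasurableSpace α] (μ ν : Measure α) : ℝ≥0∞ :=
  ⨆ (A : Set α) (_ : MeasurableSet A), ((μ A - ν A) + (ν A - μ A))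

lemma blowUp_apply {d : ℕ} (ν : Measure (EuclideanSpace ℝ (Fin d)))
    (x : EuclideanSpace ℝ (Fin d)) (t : ℝ) {A : Set (EuclideanSpace ℝ (Fin d))}
    (hA : MeasurableSet A) :
    blowUp ν x t A =
      ν ((fun y => Real.exp t • (y - x)) ⁻¹' A ∩ closedBall x (Real.exp (-t))) /
        ν (closedBall x (Real.exp (-t))) := by
  have hT : Measurable fun y : EuclideanSpace ℝ (Fin d) => Real.exp t • (y - x) :=
    ((continuous_id.sub continuous_const).const_smul (Real.exp t)).measurable
  rw [blowUp, Measure.smul_apply, Measure.map_apply hT hA,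
    Measure.restrict_apply (hT hA), smul_eq_mul, mul_comm, div_eq_mul_inv]

/-- **Asymptotic agreement of blow-ups of absolutely continuous measures.**
If `η ≠ 0` and `η ≪ γ` are Radon measures on `ℝ^d`, then for η-a.e. `x` the
total variation distance between `η_{x,t}` and `γ_{x,t}` tends to `0` as `t → ∞`. -/
theorem stmt4 {d : ℕ} (η γ : Measure (EuclideanSpace ℝ (Fin d)))
    [IsLocallyFiniteMeasure η] [IsLocallyFiniteMeasure γ]
    (hη : η ≠ 0) (hac : η ≪ γ) :
    ∀ᵐ x ∂η, Tendsto (fun t => tvDist (blowUp η x t) (blowUp γ x t)) atTop (nhds 0) := by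
  classical
  have hfmeas : Measurable (η.rnDeriv γ) := Measure.measurable_rnDeriv η γ
  set g : EuclideanSpace ℝ (Fin d) → ℝ := fun y => (η.rnDeriv γ y).toReal with hgdef
  have hgmeas : Measurable g := hfmeas.ennreal_toReal
  have hηd : γ.withDensity (η.rnDeriv γ) = η := Measure.withDensity_rnDeriv_eq η γ hac
  have hfin : ∀ᵐ y ∂γ, η.rnDeriv γ y < ∞ := Measure.rnDeriv_lt_top η γ
  have hgloc : LocallyIntegrable g γ := by
    intro x
    refine ⟨closedBall x 1, closedBall_mem_nhds x one_pos, hgmeas.aestronglyMeasurable, ?_⟩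
    refine lt_of_le_of_lt ?_ ((isCompact_closedBall x 1).measure_lt_top (μ := η))
    conv_rhs => rw [← hηd]
    rw [withDensity_apply _ measurableSet_closedBall]
    refine lintegral_mono fun y => ?_
    rw [Real.enorm_eq_ofReal_abs, abs_of_nonneg ENNReal.toReal_nonneg]
    exact ENNReal.ofReal_toReal_le
  have h1 : ∀ᵐ x ∂η, 0 < η.rnDeriv γ x := Measure.rnDeriv_pos hac
  have h2 : ∀ᵐ x ∂η, η.rnDeriv γ x < ∞ := hac.ae_le hfin
  have h3 : ∀ᵐ x ∂η, Tendsto (fun r => γ (closedBall x r) / η (closedBall x r)) (𝓝[>] 0)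
      (𝓝 ((η.rnDeriv γ x)⁻¹)) := by
    filter_upwards [Besicovitch.ae_tendsto_rnDeriv γ η, Measure.inv_rnDeriv hac] with x hx hx'
    rw [show ((η.rnDeriv γ x)⁻¹ : ℝ≥0∞) = (η.rnDeriv γ)⁻¹ x from rfl, hx']
    exact hx
  have h4 : ∀ᵐ x ∂η, Tendsto (fun r => (∫⁻ y in closedBall x r, ‖g y - g x‖₊ ∂γ) /
      γ (closedBall x r)) (𝓝[>] 0) (𝓝 0) := by
    refine hac.ae_le ?_
    filter_upwards [(Besicovitch.vitaliFamily γ).ae_tendsto_lintegral_enorm_sub_div hgloc]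
      with x hx
    exact hx.comp (Besicovitch.tendsto_filterAt γ x)
  have h5 : ∀ᵐ x ∂η, ∀ r : ℝ, 0 < r → η (closedBall x r) ≠ 0 := by
    rw [ae_iff]
    apply measure_null_of_locally_null
    intro x hx
    simp only [Set.mem_setOf_eq, not_forall] at hx
    obtain ⟨r, hr, hr0⟩ := hx
    rw [not_ne_iff] at hr0
    exact ⟨_ ∩ closedBall x r, inter_mem_nhdsWithin _ (closedBall_mem_nhds x hr),
      measure_mono_null Set.inter_subset_right hr0⟩
  filter_upwards [h1, h2, h3, h4, h5] with x hx1 hx2 hx3 hx4 hx5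
  set c : ℝ≥0∞ := η.rnDeriv γ x with hc
  have hc0 : c ≠ 0 := hx1.ne'
  have hct : c ≠ ∞ := hx2.ne
  set I : ℝ → ℝ≥0∞ := fun r => ∫⁻ y in closedBall x r, ‖g y - g x‖₊ ∂γ with hI
  have hηB : ∀ r : ℝ, 0 < r → η (closedBall x r) ≠ 0 := hx5
  have hηBt : ∀ r : ℝ, η (closedBall x r) ≠ ∞ := fun r =>
    ((isCompact_closedBall x r).measure_lt_top).ne
  have hγB : ∀ r : ℝ, 0 < r → γ (closedBall x r) ≠ 0 := fun r hr h0 => hηB r hr (hac h0)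
  have hγBt : ∀ r : ℝ, γ (closedBall x r) ≠ ∞ := fun r =>
    ((isCompact_closedBall x r).measure_lt_top).ne
  -- key integral estimates
  have key : ∀ r : ℝ, ∀ E : Set (EuclideanSpace ℝ (Fin d)), MeasurableSet E →
      E ⊆ closedBall x r → η E ≤ c * γ E + I r ∧ c * γ E ≤ η E + I r := by
    intro r E hE hEB
    have hηE : η E = ∫⁻ y in E, η.rnDeriv γ y ∂γ := by
      conv_lhs => rw [← hηd]
      rw [withDensity_apply _ hE]
    have hIE : ∫⁻ y in E, (‖g y - g x‖₊ : ℝ≥0∞) ∂γ ≤ I r := lintegral_mono_set hEB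
    have hcx : c = ENNReal.ofReal (g x) := by
      rw [hgdef]; exact (ENNReal.ofReal_toReal hct).symm
    have hp1 : ∀ᵐ y ∂(γ.restrict E), η.rnDeriv γ y ≤ c + ‖g y - g x‖₊ := by
      filter_upwards [ae_restrict_of_ae hfin] with y hy
      have hgy : η.rnDeriv γ y = ENNReal.ofReal (g y) := by
        simp only [hgdef, ENNReal.ofReal_toReal hy.ne]
      rw [← enorm_eq_nnnorm, Real.enorm_eq_ofReal_abs, hcx, hgy,
        ← ENNReal.ofReal_add ENNReal.toReal_nonneg (abs_nonneg _)]
      exact ENNReal.ofReal_le_ofReal (by linarith [le_abs_self (g y - g x)])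
    have hp2 : ∀ᵐ y ∂(γ.restrict E), c ≤ η.rnDeriv γ y + ‖g y - g x‖₊ := by
      filter_upwards [ae_restrict_of_ae hfin] with y hy
      have hgy : η.rnDeriv γ y = ENNReal.ofReal (g y) := by
        simp only [hgdef, ENNReal.ofReal_toReal hy.ne]
      rw [← enorm_eq_nnnorm, Real.enorm_eq_ofReal_abs, hcx, hgy,
        ← ENNReal.ofReal_add ENNReal.toReal_nonneg (abs_nonneg _)]
      exact ENNReal.ofReal_le_ofReal (by linarith [neg_abs_le (g y - g x)])
    constructor
    · rw [hηE]
      calc ∫⁻ y in E, η.rnDeriv γ y ∂γ ≤ ∫⁻ y in E, (c + ‖g y - g x‖₊) ∂γ :=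
            lintegral_mono_ae hp1
        _ = c * γ E + ∫⁻ y in E, (‖g y - g x‖₊ : ℝ≥0∞) ∂γ := by
            rw [lintegral_add_left measurable_const, setLIntegral_const]
        _ ≤ c * γ E + I r := add_le_add_right hIE _
    · calc c * γ E = ∫⁻ _ in E, c ∂γ := (setLIntegral_const E c).symm
        _ ≤ ∫⁻ y in E, (η.rnDeriv γ y + ‖g y - g x‖₊) ∂γ := lintegral_mono_ae hp2
        _ = (∫⁻ y in E, η.rnDeriv γ y ∂γ) + ∫⁻ y in E, (‖g y - g x‖₊ : ℝ≥0∞) ∂γ :=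
            lintegral_add_left hfmeas _
        _ ≤ η E + I r := by rw [hηE]; exact add_le_add_right hIE _
  -- main bound on the TV distance at each time t
  have mainbound : ∀ t : ℝ, tvDist (blowUp η x t) (blowUp γ x t) ≤
      2 * (I (Real.exp (-t)) / η (closedBall x (Real.exp (-t)))) +
      2 * (I (Real.exp (-t)) / (c * γ (closedBall x (Real.exp (-t))))) := by
    intro t
    set r := Real.exp (-t) with hrdef
    have hr : 0 < r := Real.exp_pos _
    obtain ⟨HF3, HF4⟩ := key r (closedBall x r) measurableSet_closedBall subset_rfl
    refine iSup_le fun A => iSup_le fun hA => ?_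
    have hT : Measurable fun y : EuclideanSpace ℝ (Fin d) => Real.exp t • (y - x) :=
      ((continuous_id.sub continuous_const).const_smul (Real.exp t)).measurable
    set E := (fun y : EuclideanSpace ℝ (Fin d) => Real.exp t • (y - x)) ⁻¹' A ∩ closedBall x r
      with hEdef
    have hE : MeasurableSet E := (hT hA).inter measurableSet_closedBall
    have hEB : E ⊆ closedBall x r := Set.inter_subset_right
    obtain ⟨HF1, HF2⟩ := key r E hE hEB
    have hμA : blowUp η x t A = η E / η (closedBall x r) := blowUp_apply η x t hA
    have hνA : blowUp γ x t A = γ E / γ (closedBall x r) := blowUp_apply γ x t hA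
    have ha2 : η (closedBall x r) ≠ 0 := hηB r hr
    have ha2t : η (closedBall x r) ≠ ∞ := hηBt r
    have hb2 : γ (closedBall x r) ≠ 0 := hγB r hr
    have hb2t : γ (closedBall x r) ≠ ∞ := hγBt r
    set a1 := η E
    set a2 := η (closedBall x r)
    set b1 := γ E
    set b2 := γ (closedBall x r)
    have hbd1 : b1 / b2 ≤ 1 :=
      ENNReal.div_le_of_le_mul (by rw [one_mul]; exact measure_mono hEB)
    have had1 : a1 / a2 ≤ 1 :=
      ENNReal.div_le_of_le_mul (by rw [one_mul]; exact measure_mono hEB)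
    have G1 : a1 / a2 ≤ b1 / b2 + 2 * (I r / a2) := by
      have step : a1 ≤ b1 / b2 * a2 + 2 * I r := by
        calc a1 ≤ c * b1 + I r := HF1
          _ = b1 / b2 * (c * b2) + I r := by
              rw [mul_comm c b2, ← mul_assoc, ENNReal.div_mul_cancel hb2 hb2t, mul_comm b1 c]
          _ ≤ b1 / b2 * (a2 + I r) + I r := by gcongr
          _ = b1 / b2 * a2 + (b1 / b2 * I r + I r) := by ring
          _ ≤ b1 / b2 * a2 + (1 * I r + I r) := by gcongr
          _ = b1 / b2 * a2 + 2 * I r := by ring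
      calc a1 / a2 ≤ (b1 / b2 * a2 + 2 * I r) / a2 := ENNReal.div_le_div_right step _
        _ = b1 / b2 * a2 / a2 + 2 * I r / a2 := ENNReal.add_div
        _ = b1 / b2 + 2 * (I r / a2) := by
            rw [mul_div_assoc, ENNReal.div_self ha2 ha2t, mul_one, mul_div_assoc]
    have G2 : b1 / b2 ≤ a1 / a2 + 2 * (I r / (c * b2)) := by
      have hcb2 : c * b2 ≠ 0 := mul_ne_zero hc0 hb2
      have hcb2t : c * b2 ≠ ∞ := ENNReal.mul_ne_top hct hb2t
      have step : c * b1 ≤ a1 / a2 * (c * b2) + 2 * I r := by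
        calc c * b1 ≤ a1 + I r := HF2
          _ = a1 / a2 * a2 + I r := by rw [ENNReal.div_mul_cancel ha2 ha2t]
          _ ≤ a1 / a2 * (c * b2 + I r) + I r := by gcongr
          _ = a1 / a2 * (c * b2) + (a1 / a2 * I r + I r) := by ring
          _ ≤ a1 / a2 * (c * b2) + (1 * I r + I r) := by gcongr
          _ = a1 / a2 * (c * b2) + 2 * I r := by ring
      calc b1 / b2 = c * b1 / (c * b2) := (ENNReal.mul_div_mul_left b1 b2 hc0 hct).symm
        _ ≤ (a1 / a2 * (c * b2) + 2 * I r) / (c * b2) := ENNReal.div_le_div_right step _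
        _ = a1 / a2 * (c * b2) / (c * b2) + 2 * I r / (c * b2) := ENNReal.add_div
        _ = a1 / a2 + 2 * (I r / (c * b2)) := by
            rw [mul_div_assoc, ENNReal.div_self hcb2 hcb2t, mul_one, mul_div_assoc]
    rw [hμA, hνA]
    exact add_le_add (tsub_le_iff_right.2 (G1.trans_eq (add_comm _ _)))
      (tsub_le_iff_right.2 (G2.trans_eq (add_comm _ _)))
  -- the bound tends to zero
  have hlim : Tendsto (fun r : ℝ => 2 * (I r / η (closedBall x r)) +
      2 * (I r / (c * γ (closedBall x r)))) (𝓝[>] 0) (𝓝 0) := by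
    have m1 : Tendsto (fun r : ℝ => I r / η (closedBall x r)) (𝓝[>] 0) (𝓝 0) := by
      have := ENNReal.Tendsto.mul hx4 (Or.inr (ENNReal.inv_ne_top.2 hc0)) hx3
        (Or.inr ENNReal.zero_ne_top)
      rw [zero_mul] at this
      apply this.congr'
      filter_upwards [self_mem_nhdsWithin] with r hr
      have hr' : (0 : ℝ) < r := hr
      rw [div_eq_mul_inv, div_eq_mul_inv, div_eq_mul_inv, mul_assoc,
        ← mul_assoc (γ (closedBall x r))⁻¹, ENNReal.inv_mul_cancel (hγB r hr') (hγBt r), one_mul]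
    have m2 : Tendsto (fun r : ℝ => I r / (c * γ (closedBall x r))) (𝓝[>] 0) (𝓝 0) := by
      have := ENNReal.Tendsto.const_mul (a := c⁻¹) hx4 (Or.inr (ENNReal.inv_ne_top.2 hc0))
      rw [mul_zero] at this
      apply this.congr'
      filter_upwards [self_mem_nhdsWithin] with r hr
      rw [div_eq_mul_inv, div_eq_mul_inv, ENNReal.mul_inv (Or.inl hc0) (Or.inl hct)]
      ring
    have hsum := (ENNReal.Tendsto.const_mul m1 (Or.inr (ENNReal.ofNat_ne_top (n := 2)))).add
      (ENNReal.Tendsto.const_mul m2 (Or.inr (ENNReal.ofNat_ne_top (n := 2))))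
    rw [mul_zero, add_zero] at hsum
    exact hsum
  have hexp : Tendsto (fun t : ℝ => Real.exp (-t)) atTop (𝓝[>] 0) :=
    tendsto_nhdsWithin_of_tendsto_nhds_of_eventually_within _
      (Real.tendsto_exp_atBot.comp tendsto_neg_atTop_atBot)
      (Eventually.of_forall fun t => Real.exp_pos _)
  have final := hlim.comp hexp
  exact tendsto_of_tendsto_of_tendsto_of_le_of_le tendsto_const_nhds final
    (fun t => zero_le) (fun t => mainbound t)
end

section
/- Let Φ = {φ_i(x) = ρ x + a_i}_{i∈Γ} be an equicontractive homothetic self-similar IFS on ℝ^d satisfying the weak separation condition, with maximal neighbourhood system 𝒩₀ = 𝒩(𝚊₀). Then there exist a finite word 𝚋₀ ∈ Γ* with 𝒩(𝚋₀) = 𝒩₀ and a subcollection 𝓕 ⊆ 𝒩₀ such that: (i) for every h ∈ 𝓕 there exists 𝚋_h ∈ Γ* with h ∘ φ_{𝚋_h} = φ_{𝚋₀} and 𝒩(𝚋_h) = 𝒩₀; and (ii) for every h ∈ 𝒩₀ \ 𝓕, B_{𝚋₀} ∩ h(K) = ∅. -/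
open Metric

/-- Composition `φ_𝚊` along a finite word. -/
def wordMap {Γ α : Type*} (φ : Γ → α → α) : List Γ → α → α
  | [] => id
  | i :: a => φ i ∘ wordMap φ a

/-- Equicontractive neighbourhood system. -/
def nbhdE {Γ : Type*} {d : ℕ}
    (φ : Γ → EuclideanSpace ℝ (Fin d) → EuclideanSpace ℝ (Fin d))
    (K : Set (EuclideanSpace ℝ (Fin d))) (a : List Γ) :
    Set (EuclideanSpace ℝ (Fin d) → EuclideanSpace ℝ (Fin d)) :=
  {f | ∃ b : List Γ, b.length = a.length ∧
    (wordMap φ b '' K ∩ wordMap φ a '' closedBall 0 1).Nonempty ∧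
    wordMap φ a ∘ f = wordMap φ b}

namespace Stmt10Aux

variable {Γ : Type*} {d : ℕ}

local notation "E" => EuclideanSpace ℝ (Fin d)

lemma wordMap_append (φ : Γ → E → E) (u v : List Γ) :
    wordMap φ (u ++ v) = wordMap φ u ∘ wordMap φ v := by
  induction u with
  | nil => rfl
  | cons i u ih =>
      show φ i ∘ wordMap φ (u ++ v) = (φ i ∘ wordMap φ u) ∘ wordMap φ v
      rw [ih, Function.comp_assoc]

lemma exists_affine {ρ : ℝ} {a : Γ → E} {φ : Γ → E → E}
    (hφ : ∀ i x, φ i x = ρ • x + a i) (w : List Γ) :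
    ∃ c : E, ∀ x, wordMap φ w x = ρ ^ w.length • x + c := by
  induction w with
  | nil => exact ⟨0, fun x => by simp [wordMap]⟩
  | cons i w ih =>
      obtain ⟨c, hc⟩ := ih
      refine ⟨ρ • c + a i, fun x => ?_⟩
      show φ i (wordMap φ w x) = ρ ^ (w.length + 1) • x + (ρ • c + a i)
      rw [hφ, hc, smul_add, smul_smul, ← add_assoc, ← pow_succ']

lemma dist_wordMap {ρ : ℝ} {a : Γ → E} {φ : Γ → E → E}
    (hρ : ρ ∈ Set.Ioo (0:ℝ) 1)
    (hφ : ∀ i x, φ i x = ρ • x + a i) (w : List Γ) (x y : E) :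
    dist (wordMap φ w x) (wordMap φ w y) = ρ ^ w.length * dist x y := by
  obtain ⟨c, hc⟩ := exists_affine hφ w
  rw [hc, hc, dist_eq_norm, dist_eq_norm]
  have : ρ ^ w.length • x + c - (ρ ^ w.length • y + c) = ρ ^ w.length • (x - y) := by
    rw [smul_sub]; abel
  rw [this, norm_smul, Real.norm_eq_abs, abs_of_pos (pow_pos hρ.1 _)]

lemma exists_inverse {ρ : ℝ} {a : Γ → E} {φ : Γ → E → E}
    (hρ : ρ ∈ Set.Ioo (0:ℝ) 1)
    (hφ : ∀ i x, φ i x = ρ • x + a i) (w : List Γ) :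
    ∃ ψ : E → E, wordMap φ w ∘ ψ = id ∧ ψ ∘ wordMap φ w = id ∧ Continuous ψ := by
  obtain ⟨c, hc⟩ := exists_affine hφ w
  have hr : ρ ^ w.length ≠ 0 := (pow_pos hρ.1 _).ne'
  refine ⟨fun y => (ρ ^ w.length)⁻¹ • (y - c), ?_, ?_, ?_⟩
  · funext y
    show wordMap φ w ((ρ ^ w.length)⁻¹ • (y - c)) = y
    rw [hc, smul_smul, mul_inv_cancel₀ hr, one_smul]
    abel
  · funext x
    show (ρ ^ w.length)⁻¹ • (wordMap φ w x - c) = x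
    rw [hc, add_sub_cancel_right, smul_smul, inv_mul_cancel₀ hr, one_smul]
  · exact (continuous_id.sub continuous_const : Continuous fun y : E => y - c).const_smul ((ρ ^ w.length)⁻¹)

lemma continuous_wordMap {ρ : ℝ} {a : Γ → E} {φ : Γ → E → E}
    (hφ : ∀ i x, φ i x = ρ • x + a i) (w : List Γ) :
    Continuous (wordMap φ w) := by
  obtain ⟨c, hc⟩ := exists_affine hφ w
  have : wordMap φ w = fun x => ρ ^ w.length • x + c := funext hc
  rw [this]
  exact (continuous_id.const_smul (ρ ^ w.length) : Continuous fun x : E => ρ ^ w.length • x).add continuous_const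

lemma wordMap_injective {ρ : ℝ} {a : Γ → E} {φ : Γ → E → E}
    (hρ : ρ ∈ Set.Ioo (0:ℝ) 1)
    (hφ : ∀ i x, φ i x = ρ • x + a i) (w : List Γ) :
    Function.Injective (wordMap φ w) := by
  obtain ⟨ψ, -, hψ, -⟩ := exists_inverse hρ hφ w
  intro x y hxy
  have := congrFun hψ x
  have h2 := congrFun hψ y
  simp only [Function.comp_apply, id_eq] at this h2
  rw [← this, ← h2, hxy]

/-- powers of a word, `wpow R (n+1) = R ++ wpow R n`. -/
def wpow (R : List Γ) : ℕ → List Γ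
  | 0 => []
  | n + 1 => R ++ wpow R n

lemma wordMap_wpow_succ (φ : Γ → E → E) (R : List Γ) (n : ℕ) :
    wordMap φ (wpow R (n+1)) = wordMap φ R ∘ wordMap φ (wpow R n) := by
  show wordMap φ (R ++ wpow R n) = _
  rw [wordMap_append]

lemma length_wpow (R : List Γ) (n : ℕ) : (wpow R n).length = n * R.length := by
  induction n with
  | zero => simp [wpow]
  | succ n ih =>
      show (R ++ wpow R n).length = (n+1) * R.length
      rw [List.length_append, ih]; ring

lemma wpow_ends {R a₀ : List Γ} (hR : ∃ c, R = c ++ a₀) (n : ℕ) (hn : n ≠ 0) :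
    ∃ c, wpow R n = c ++ a₀ := by
  induction n with
  | zero => exact absurd rfl hn
  | succ n ih =>
      rcases Nat.eq_zero_or_pos n with h0 | hpos
      · subst h0
        obtain ⟨c, hc⟩ := hR
        exact ⟨c, by simp [wpow, hc]⟩
      · obtain ⟨c, hc⟩ := ih hpos.ne'
        exact ⟨R ++ c, by simp [wpow, hc]⟩

lemma wordMap_wpow_fix (φ : Γ → E → E) {R : List Γ} {x : E}
    (hx : wordMap φ R x = x) (n : ℕ) : wordMap φ (wpow R n) x = x := by
  induction n with
  | zero => rfl
  | succ n ih =>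
      rw [wordMap_wpow_succ]
      show wordMap φ R (wordMap φ (wpow R n) x) = x
      rw [ih, hx]

lemma image_K_subset {φ : Γ → E → E} {K : Set E}
    (hattr : K = ⋃ i, φ i '' K) (w : List Γ) :
    wordMap φ w '' K ⊆ K := by
  induction w with
  | nil => simp [wordMap]
  | cons i w ih =>
      show (φ i ∘ wordMap φ w) '' K ⊆ K
      rw [Set.image_comp]
      refine subset_trans (Set.image_mono ih) ?_
      rw [hattr]
      exact Set.subset_iUnion_of_subset i (by rw [← hattr])

lemma exists_word_mem {φ : Γ → E → E} {K : Set E}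
    (hattr : K = ⋃ i, φ i '' K) {x : E} (hx : x ∈ K) (l : ℕ) :
    ∃ w : List Γ, w.length = l ∧ x ∈ wordMap φ w '' K := by
  induction l generalizing x with
  | zero => exact ⟨[], rfl, by simpa [wordMap] using hx⟩
  | succ l ih =>
      have hx2 : x ∈ ⋃ i, φ i '' K := hattr ▸ hx
      simp only [Set.mem_iUnion] at hx2
      obtain ⟨i, x', hx', rfl⟩ := hx2
      obtain ⟨w, hwl, y, hy, hyx⟩ := ih hx'
      exact ⟨i :: w, by simp [hwl], y, hy, by simp [wordMap, hyx]⟩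


lemma exists_fixedPoint {ρ : ℝ} {a : Γ → E} {φ : Γ → E → E} {K : Set E}
    (hρ : ρ ∈ Set.Ioo (0:ℝ) 1)
    (hφ : ∀ i x, φ i x = ρ • x + a i)
    (hKc : IsCompact K) (hKne : K.Nonempty) (hattr : K = ⋃ i, φ i '' K)
    {R : List Γ} (hR : R ≠ []) :
    ∃ x, x ∈ K ∧ wordMap φ R x = x := by
  set f := wordMap φ R with hf
  have hlip : LipschitzWith (Real.toNNReal (ρ ^ R.length)) f := by
    apply LipschitzWith.of_dist_le_mul
    intro x y
    rw [dist_wordMap hρ hφ]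
    rw [Real.coe_toNNReal _ (pow_pos hρ.1 _).le]
  have hlt : ρ ^ R.length < 1 := by
    apply pow_lt_one₀ hρ.1.le hρ.2
    simpa using hR
  have hcontr : ContractingWith (Real.toNNReal (ρ ^ R.length)) f := by
    constructor
    · rw [← NNReal.coe_lt_coe, Real.coe_toNNReal _ (pow_pos hρ.1 _).le]
      exact hlt
    · exact hlip
  obtain ⟨k₀, hk₀⟩ := hKne
  have hiter : ∀ n, f^[n] k₀ ∈ K := by
    intro n
    induction n with
    | zero => exact hk₀
    | succ n ih =>
        rw [Function.iterate_succ_apply']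
        exact image_K_subset hattr R ⟨_, ih, rfl⟩
  refine ⟨hcontr.fixedPoint f, ?_, hcontr.fixedPoint_isFixedPt⟩
  exact hKc.isClosed.mem_of_tendsto (hcontr.tendsto_iterate_fixedPoint k₀)
    (Filter.Eventually.of_forall hiter)

lemma nbhd_subset_prepend (φ : Γ → E → E) (K : Set E) (a₀ c : List Γ) :
    nbhdE φ K a₀ ⊆ nbhdE φ K (c ++ a₀) := by
  rintro f ⟨b, hlen, ⟨q, hqK, hqB⟩, heq⟩
  refine ⟨c ++ b, by simp [hlen], ⟨wordMap φ c q, ?_, ?_⟩, ?_⟩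
  · rw [wordMap_append, Set.image_comp]
    exact ⟨q, hqK, rfl⟩
  · rw [wordMap_append, Set.image_comp]
    exact ⟨q, hqB, rfl⟩
  · rw [wordMap_append, wordMap_append, Function.comp_assoc, heq]

lemma nbhd_ends_eq {φ : Γ → E → E} {K : Set E} {a₀ : List Γ}
    (hfin : ∀ w : List Γ, (nbhdE φ K w).Finite)
    (hmax : ∀ w : List Γ, (nbhdE φ K w).ncard ≤ (nbhdE φ K a₀).ncard)
    {w : List Γ} (hw : ∃ c, w = c ++ a₀) :
    nbhdE φ K w = nbhdE φ K a₀ := by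
  obtain ⟨c, rfl⟩ := hw
  exact (Set.eq_of_subset_of_ncard_le (nbhd_subset_prepend φ K a₀ c)
    (hmax _) (hfin _)).symm

lemma nbhd_continuous {ρ : ℝ} {a : Γ → E} {φ : Γ → E → E} {K : Set E}
    (hρ : ρ ∈ Set.Ioo (0:ℝ) 1)
    (hφ : ∀ i x, φ i x = ρ • x + a i)
    {w : List Γ} {h : E → E} (hh : h ∈ nbhdE φ K w) : Continuous h := by
  obtain ⟨b, -, -, heq⟩ := hh
  obtain ⟨ψ, -, hψl, hψc⟩ := exists_inverse hρ hφ w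
  have : h = ψ ∘ wordMap φ b := by
    funext x
    have h1 : ψ (wordMap φ w (h x)) = h x := congrFun hψl (h x)
    have h2 : wordMap φ w (h x) = wordMap φ b x := congrFun heq x
    rw [Function.comp_apply, ← h2, h1]
  rw [this]
  exact hψc.comp (continuous_wordMap hφ b)

lemma stage {ρ : ℝ} {a : Γ → E} {φ : Γ → E → E} {K : Set E} {a₀ : List Γ}
    (hρ : ρ ∈ Set.Ioo (0:ℝ) 1)
    (hφ : ∀ i x, φ i x = ρ • x + a i)
    (hattr : K = ⋃ i, φ i '' K) (hKball : K ⊆ ball 0 1)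
    (hfin : ∀ w : List Γ, (nbhdE φ K w).Finite)
    (hmax : ∀ w : List Γ, (nbhdE φ K w).ncard ≤ (nbhdE φ K a₀).ncard)
    {R : List Γ} (hRne : R ≠ []) (hRend : ∃ c, R = c ++ a₀)
    {x : E} (hxK : x ∈ K) (hxfix : wordMap φ R x = x)
    {h : E → E} (hh : h ∈ nbhdE φ K a₀) (hxh : x ∈ h '' K) :
    ∃ (R' y z : List Γ),
      R' ≠ [] ∧ (∃ c, R' = c ++ a₀) ∧ (∃ c, y = c ++ a₀) ∧ (∃ c, z = c ++ a₀) ∧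
      wordMap φ R' = wordMap φ R ∘ wordMap φ z ∧
      wordMap φ R' = h ∘ wordMap φ y := by
  -- h is a neighbour of R
  have hhR : h ∈ nbhdE φ K R := by
    rw [nbhd_ends_eq hfin hmax hRend]; exact hh
  obtain ⟨B, hBlen, -, hBeq⟩ := hhR
  -- x ∈ K_B
  have hxB : x ∈ wordMap φ B '' K := by
    have : x ∈ (wordMap φ R ∘ h) '' K := by
      rw [Set.image_comp]
      exact ⟨x, hxh, hxfix⟩
    rwa [hBeq] at this
  obtain ⟨ξ, hξK, hξ⟩ := hxB
  -- a word w of length 2|R| below ξ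
  obtain ⟨w, hwlen, hξw⟩ := exists_word_mem hattr hξK (2 * R.length)
  set u := B ++ w with hu
  have hxu : x ∈ wordMap φ u '' K := by
    obtain ⟨κ, hκK, hκ⟩ := hξw
    refine ⟨κ, hκK, ?_⟩
    rw [hu, wordMap_append, Function.comp_apply, hκ, hξ]
  -- the discrepancy γ at level 3
  set R3 := wpow R 3 with hR3
  have hR3decomp : R3 = R ++ (R ++ (R ++ [])) := by simp [hR3, wpow]
  have hR3map : wordMap φ R3 = wordMap φ R ∘ wordMap φ (R ++ R) := by
    rw [hR3decomp, wordMap_append]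
    congr 1
    rw [wordMap_append, wordMap_append, wordMap_append]
    simp [wordMap]
  obtain ⟨ψ3, hψ3r, hψ3l, -⟩ := exists_inverse hρ hφ R3
  set γ := ψ3 ∘ wordMap φ u with hγ
  have hγeq : wordMap φ R3 ∘ γ = wordMap φ u := by
    rw [hγ, ← Function.comp_assoc, hψ3r, Function.id_comp]
  have hγmem : γ ∈ nbhdE φ K R3 := by
    refine ⟨u, ?_, ⟨x, hxu, ?_⟩, hγeq⟩
    · rw [hu, List.length_append, hBlen, hwlen, hR3, length_wpow]; ring
    · exact ⟨x, ball_subset_closedBall (hKball hxK), wordMap_wpow_fix φ hxfix 3⟩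
  have hγa₀ : γ ∈ nbhdE φ K a₀ := by
    rw [← nbhd_ends_eq hfin hmax (wpow_ends hRend 3 (by norm_num))]
    exact hγmem
  -- realize γ at levels 2 and 1
  have hRRend : ∃ c, R ++ R = c ++ a₀ := by
    obtain ⟨c, hc⟩ := hRend
    exact ⟨R ++ c, by rw [hc]; simp⟩
  have hγRR : γ ∈ nbhdE φ K (R ++ R) := by
    rw [nbhd_ends_eq hfin hmax hRRend]; exact hγa₀
  obtain ⟨E1, hE1len, -, hE1eq⟩ := hγRR
  have hγR : γ ∈ nbhdE φ K R := by
    rw [nbhd_ends_eq hfin hmax hRend]; exact hγa₀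
  obtain ⟨E2, -, -, hE2eq⟩ := hγR
  -- cancel one φ_R : φ_{R++R} ∘ γ = h ∘ φ_w
  have hcancel : wordMap φ (R ++ R) ∘ γ = h ∘ wordMap φ w := by
    have hL : wordMap φ R ∘ (wordMap φ (R ++ R) ∘ γ) = wordMap φ R ∘ (h ∘ wordMap φ w) := by
      rw [← Function.comp_assoc, ← hR3map, hγeq, hu, wordMap_append,
        ← Function.comp_assoc, ← hBeq, Function.comp_assoc]
    funext p
    exact wordMap_injective hρ hφ R (congrFun hL p)
  -- assemble
  refine ⟨E1 ++ a₀, w ++ a₀, E2 ++ a₀, ?_, ⟨E1, rfl⟩, ⟨w, rfl⟩, ⟨E2, rfl⟩, ?_, ?_⟩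
  · have hE1ne : E1 ≠ [] := by
      intro hnil
      rw [hnil] at hE1len
      have : R.length ≠ 0 := by simpa using hRne
      simp [List.length_append] at hE1len
      omega
    simp [hE1ne]
  · -- φ_{E1 ++ a₀} = φ_R ∘ φ_{E2 ++ a₀}
    have key : wordMap φ E1 = wordMap φ R ∘ wordMap φ E2 := by
      rw [← hE1eq, ← hE2eq, wordMap_append, Function.comp_assoc]
    rw [wordMap_append, key, wordMap_append (φ := φ) E2 a₀, Function.comp_assoc]
  · -- φ_{E1 ++ a₀} = h ∘ φ_{w ++ a₀}
    rw [wordMap_append, ← hE1eq, hcancel, wordMap_append, Function.comp_assoc]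

lemma main_ind {ρ : ℝ} {a : Γ → E} {φ : Γ → E → E} {K : Set E} {a₀ : List Γ}
    (hρ : ρ ∈ Set.Ioo (0:ℝ) 1)
    (hφ : ∀ i x, φ i x = ρ • x + a i)
    (hKc : IsCompact K) (hKne : K.Nonempty)
    (hattr : K = ⋃ i, φ i '' K) (hKball : K ⊆ ball 0 1)
    (hfin : ∀ w : List Γ, (nbhdE φ K w).Finite)
    (hmax : ∀ w : List Γ, (nbhdE φ K w).ncard ≤ (nbhdE φ K a₀).ncard) :
    ∀ n : ℕ, ∀ R : List Γ, R ≠ [] → (∃ c, R = c ++ a₀) →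
      ((nbhdE φ K a₀) \
        {h | ∃ y, (∃ c, y = c ++ a₀) ∧ wordMap φ R = h ∘ wordMap φ y}).ncard ≤ n →
      ∃ (R' : List Γ) (x : E), R' ≠ [] ∧ (∃ c, R' = c ++ a₀) ∧ x ∈ K ∧
        wordMap φ R' x = x ∧
        (∀ h', (∃ y, (∃ c, y = c ++ a₀) ∧ wordMap φ R = h' ∘ wordMap φ y) →
          (∃ y, (∃ c, y = c ++ a₀) ∧ wordMap φ R' = h' ∘ wordMap φ y)) ∧
        (∀ h, h ∈ nbhdE φ K a₀ →
          ¬(∃ y, (∃ c, y = c ++ a₀) ∧ wordMap φ R' = h ∘ wordMap φ y) →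
          x ∉ h '' K) := by
  intro n
  induction n with
  | zero =>
      intro R hRne hRend hcard
      obtain ⟨x, hxK, hxfix⟩ := exists_fixedPoint hρ hφ hKc hKne hattr hRne
      refine ⟨R, x, hRne, hRend, hxK, hxfix, fun h' hy => hy, ?_⟩
      intro h hh hnh _
      have hfinS : ((nbhdE φ K a₀) \
          {h | ∃ y, (∃ c, y = c ++ a₀) ∧ wordMap φ R = h ∘ wordMap φ y}).Finite :=
        (hfin a₀).subset Set.diff_subset
      have : ((nbhdE φ K a₀) \
          {h | ∃ y, (∃ c, y = c ++ a₀) ∧ wordMap φ R = h ∘ wordMap φ y}) = ∅ := by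
        rw [← Set.ncard_eq_zero hfinS]
        omega
      have hmem : h ∈ ((nbhdE φ K a₀) \
          {h | ∃ y, (∃ c, y = c ++ a₀) ∧ wordMap φ R = h ∘ wordMap φ y}) := ⟨hh, hnh⟩
      rw [this] at hmem
      exact hmem
  | succ n ih =>
      intro R hRne hRend hcard
      obtain ⟨x, hxK, hxfix⟩ := exists_fixedPoint hρ hφ hKc hKne hattr hRne
      by_cases hc : ∃ h, h ∈ nbhdE φ K a₀ ∧
          ¬(∃ y, (∃ c, y = c ++ a₀) ∧ wordMap φ R = h ∘ wordMap φ y) ∧ x ∈ h '' K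
      · obtain ⟨h, hh, hnh, hxh⟩ := hc
        obtain ⟨R', y, z, hR'ne, hR'end, hyend, hzend, hR'z, hR'y⟩ :=
          stage hρ hφ hattr hKball hfin hmax hRne hRend hxK hxfix hh hxh
        -- monotonicity of handled sets
        have hmono : ∀ h', (∃ y, (∃ c, y = c ++ a₀) ∧ wordMap φ R = h' ∘ wordMap φ y) →
            (∃ y, (∃ c, y = c ++ a₀) ∧ wordMap φ R' = h' ∘ wordMap φ y) := by
          rintro h' ⟨y', ⟨c', hc'⟩, hy'⟩
          obtain ⟨cz, hcz⟩ := hzend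
          refine ⟨y' ++ z, ⟨y' ++ cz, by rw [hcz, List.append_assoc]⟩, ?_⟩
          rw [hR'z, hy', wordMap_append, Function.comp_assoc]
        have hhR' : ∃ y, (∃ c, y = c ++ a₀) ∧ wordMap φ R' = h ∘ wordMap φ y :=
          ⟨y, hyend, hR'y⟩
        -- strict decrease of the unhandled set
        have hsub : ((nbhdE φ K a₀) \
            {h | ∃ y, (∃ c, y = c ++ a₀) ∧ wordMap φ R' = h ∘ wordMap φ y}) ⊂
            ((nbhdE φ K a₀) \
            {h | ∃ y, (∃ c, y = c ++ a₀) ∧ wordMap φ R = h ∘ wordMap φ y}) := by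
          constructor
          · rintro h'' ⟨hh'', hn''⟩
            exact ⟨hh'', fun hy => hn'' (hmono h'' hy)⟩
          · intro hcontra
            have : h ∈ ((nbhdE φ K a₀) \
                {h | ∃ y, (∃ c, y = c ++ a₀) ∧ wordMap φ R' = h ∘ wordMap φ y}) :=
              hcontra ⟨hh, hnh⟩
            exact this.2 hhR'
        have hlt : ((nbhdE φ K a₀) \
            {h | ∃ y, (∃ c, y = c ++ a₀) ∧ wordMap φ R' = h ∘ wordMap φ y}).ncard <
            ((nbhdE φ K a₀) \
            {h | ∃ y, (∃ c, y = c ++ a₀) ∧ wordMap φ R = h ∘ wordMap φ y}).ncard :=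
          Set.ncard_lt_ncard hsub ((hfin a₀).subset Set.diff_subset)
        obtain ⟨R'', x'', p1, p2, p3, p4, p5, p6⟩ := ih R' hR'ne hR'end (by omega)
        exact ⟨R'', x'', p1, p2, p3, p4, fun h' hy => p5 h' (hmono h' hy), p6⟩
      · push_neg at hc
        refine ⟨R, x, hRne, hRend, hxK, hxfix, fun h' hy => hy, ?_⟩
        intro h hh hnh
        exact hc h hh (fun y hy he => hnh ⟨y, hy, he⟩)

theorem stmt10' {Γ : Type*} [Fintype Γ] [Nonempty Γ] {d : ℕ}
    (ρ : ℝ) (hρ : ρ ∈ Set.Ioo (0 : ℝ) 1) (a : Γ → EuclideanSpace ℝ (Fin d))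
    (φ : Γ → EuclideanSpace ℝ (Fin d) → EuclideanSpace ℝ (Fin d))
    (hφ : ∀ i x, φ i x = ρ • x + a i)
    (K : Set (EuclideanSpace ℝ (Fin d))) (hKc : IsCompact K) (hKne : K.Nonempty)
    (hattr : K = ⋃ i, φ i '' K) (hKball : K ⊆ ball 0 1)
    (hfin : ∀ w : List Γ, (nbhdE φ K w).Finite)
    (a₀ : List Γ) (hmax : ∀ w : List Γ, (nbhdE φ K w).ncard ≤ (nbhdE φ K a₀).ncard) :
    ∃ (b₀ : List Γ) (F : Set (EuclideanSpace ℝ (Fin d) → EuclideanSpace ℝ (Fin d))),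
      F ⊆ nbhdE φ K a₀ ∧ nbhdE φ K b₀ = nbhdE φ K a₀ ∧
      (∀ h ∈ F, ∃ bh : List Γ,
        h ∘ wordMap φ bh = wordMap φ b₀ ∧ nbhdE φ K bh = nbhdE φ K a₀) ∧
      (∀ h ∈ nbhdE φ K a₀ \ F,
        wordMap φ b₀ '' closedBall 0 1 ∩ h '' K = ∅) := by
  classical
  obtain ⟨i₀⟩ := (inferInstance : Nonempty Γ)
  have hR₀ne : (i₀ :: a₀ : List Γ) ≠ [] := by simp
  have hR₀end : ∃ c, (i₀ :: a₀ : List Γ) = c ++ a₀ := ⟨[i₀], rfl⟩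
  obtain ⟨R, x, hRne, hRend, hxK, hxfix, -, hmiss⟩ :=
    main_ind hρ hφ hKc hKne hattr hKball hfin hmax _ (i₀ :: a₀) hR₀ne hR₀end le_rfl
  set H : Set (EuclideanSpace ℝ (Fin d) → EuclideanSpace ℝ (Fin d)) :=
    {h | ∃ y, (∃ c, y = c ++ a₀) ∧ wordMap φ R = h ∘ wordMap φ y} with hH
  set T := nbhdE φ K a₀ \ H with hT
  have hTfin : T.Finite := (hfin a₀).subset Set.diff_subset
  -- every unhandled neighbour misses x
  have hTmiss : ∀ h ∈ T, x ∉ h '' K := by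
    rintro h ⟨hh, hnH⟩
    exact hmiss h hh hnH
  -- choose ε > 0 below all infDists
  have himg : ∀ h ∈ T, IsClosed (h '' K) ∧ (h '' K).Nonempty := by
    rintro h ⟨hh, -⟩
    exact ⟨(hKc.image (nbhd_continuous hρ hφ hh)).isClosed, hKne.image h⟩
  have hpos : ∀ h ∈ T, 0 < infDist x (h '' K) := by
    intro h hh
    obtain ⟨hcl, hne⟩ := himg h hh
    exact (hcl.notMem_iff_infDist_pos hne).1 (hTmiss h hh)
  obtain ⟨ε, hεpos, hεle⟩ :
      ∃ ε : ℝ, 0 < ε ∧ ∀ h ∈ T, ε ≤ infDist x (h '' K) := by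
    rcases eq_or_ne T ∅ with hTe | hTne
    · exact ⟨1, one_pos, by simp [hTe]⟩
    · have hTne' : hTfin.toFinset.Nonempty := by
        rw [Set.Finite.toFinset_nonempty]
        exact Set.nonempty_iff_ne_empty.2 hTne
      obtain ⟨h₀, h₀mem, h₀min⟩ :=
        hTfin.toFinset.exists_min_image (fun h => infDist x (h '' K)) hTne'
      rw [Set.Finite.mem_toFinset] at h₀mem
      refine ⟨infDist x (h₀ '' K), hpos h₀ h₀mem, fun h hh => ?_⟩
      exact h₀min h (hTfin.mem_toFinset.2 hh)
  obtain ⟨m₀, hm₀⟩ := exists_pow_lt_of_lt_one (half_pos hεpos) hρ.2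
  -- the final word
  refine ⟨wpow R (m₀ + 1), nbhdE φ K a₀ ∩ H, Set.inter_subset_left, ?_, ?_, ?_⟩
  · exact nbhd_ends_eq hfin hmax (wpow_ends hRend (m₀+1) (Nat.succ_ne_zero _))
  · -- part (i)
    rintro h ⟨hh, y, ⟨c, hc⟩, hy⟩
    refine ⟨y ++ wpow R m₀, ?_, ?_⟩
    · rw [wordMap_append, ← Function.comp_assoc, ← hy, ← wordMap_wpow_succ]
    · apply nbhd_ends_eq hfin hmax
      rcases Nat.eq_zero_or_pos m₀ with h0 | hp
      · subst h0
        exact ⟨c, by simp [wpow, hc]⟩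
      · obtain ⟨c', hc'⟩ := wpow_ends hRend m₀ hp.ne'
        exact ⟨y ++ c', by rw [hc', List.append_assoc]⟩
  · -- part (ii)
    rintro h ⟨hh, hnF⟩
    have hhT : h ∈ T := ⟨hh, fun hmem => hnF ⟨hh, hmem⟩⟩
    rw [Set.eq_empty_iff_forall_notMem]
    rintro q ⟨⟨p, hp, rfl⟩, hqK⟩
    -- distance estimate
    have hfixb : wordMap φ (wpow R (m₀+1)) x = x := wordMap_wpow_fix φ hxfix _
    have hdist : dist (wordMap φ (wpow R (m₀+1)) p) x ≤ 2 * ρ ^ (m₀ + 1) := by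
      have h1 : dist p x ≤ 2 := by
        rw [dist_eq_norm]
        refine le_trans (norm_sub_le _ _) ?_
        have hp1 : ‖p‖ ≤ 1 := mem_closedBall_zero_iff.1 hp
        have hx1 : ‖x‖ ≤ 1 := le_of_lt (mem_ball_zero_iff.1 (hKball hxK))
        linarith
      have h2 : ρ ^ (wpow R (m₀+1)).length ≤ ρ ^ (m₀ + 1) := by
        apply pow_le_pow_of_le_one hρ.1.le hρ.2.le
        rw [length_wpow]
        have : 1 ≤ R.length := by
          rcases R with _ | ⟨i, R⟩
          · exact absurd rfl hRne
          · simp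
        calc m₀ + 1 = (m₀ + 1) * 1 := by ring
          _ ≤ (m₀ + 1) * R.length := by
              exact Nat.mul_le_mul_left _ this
      calc dist (wordMap φ (wpow R (m₀+1)) p) x
            = dist (wordMap φ (wpow R (m₀+1)) p) (wordMap φ (wpow R (m₀+1)) x) := by
              rw [hfixb]
        _ = ρ ^ (wpow R (m₀+1)).length * dist p x := dist_wordMap hρ hφ _ _ _
        _ ≤ ρ ^ (m₀+1) * 2 := by
            apply mul_le_mul h2 h1 dist_nonneg (pow_nonneg hρ.1.le _)
        _ = 2 * ρ ^ (m₀+1) := by ring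
    have hlt : dist (wordMap φ (wpow R (m₀+1)) p) x < ε := by
      have : (2:ℝ) * ρ ^ (m₀ + 1) < ε := by
        have hle : ρ ^ (m₀ + 1) ≤ ρ ^ m₀ := by
          rw [pow_succ]
          nlinarith [pow_pos hρ.1 m₀, hρ.1, hρ.2]
        nlinarith
      linarith
    have hge : ε ≤ dist (wordMap φ (wpow R (m₀+1)) p) x := by
      refine le_trans (hεle h hhT) ?_
      rw [dist_comm]
      exact infDist_le_dist_of_mem hqK
    linarith

end Stmt10Aux

/-- **Structure of the maximal neighbourhood system.** For an equicontractive
homothetic IFS with the weak separation condition, there exist a word `𝚋₀` with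
`𝒩(𝚋₀) = 𝒩₀` and a family `𝓕 ⊆ 𝒩₀` such that: (i) for each `h ∈ 𝓕` there is a
word `𝚋_h` with `h ∘ φ_{𝚋_h} = φ_{𝚋₀}` and `𝒩(𝚋_h) = 𝒩₀`; (ii) for each
`h ∈ 𝒩₀ \ 𝓕`, `B_{𝚋₀} ∩ h(K) = ∅`. -/
theorem stmt10 {Γ : Type*} [Fintype Γ] [Nonempty Γ] {d : ℕ}
    (ρ : ℝ) (hρ : ρ ∈ Set.Ioo (0 : ℝ) 1) (a : Γ → EuclideanSpace ℝ (Fin d))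
    (φ : Γ → EuclideanSpace ℝ (Fin d) → EuclideanSpace ℝ (Fin d))
    (hφ : ∀ i x, φ i x = ρ • x + a i)
    (K : Set (EuclideanSpace ℝ (Fin d))) (hKc : IsCompact K) (hKne : K.Nonempty)
    (hattr : K = ⋃ i, φ i '' K) (hKball : K ⊆ ball 0 1)
    (hfin : ∀ w : List Γ, (nbhdE φ K w).Finite)
    (a₀ : List Γ) (hmax : ∀ w : List Γ, (nbhdE φ K w).ncard ≤ (nbhdE φ K a₀).ncard) :
    ∃ (b₀ : List Γ) (F : Set (EuclideanSpace ℝ (Fin d) → EuclideanSpace ℝ (Fin d))),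
      F ⊆ nbhdE φ K a₀ ∧ nbhdE φ K b₀ = nbhdE φ K a₀ ∧
      (∀ h ∈ F, ∃ bh : List Γ,
        h ∘ wordMap φ bh = wordMap φ b₀ ∧ nbhdE φ K bh = nbhdE φ K a₀) ∧
      (∀ h ∈ nbhdE φ K a₀ \ F,
        wordMap φ b₀ '' closedBall 0 1 ∩ h '' K = ∅) := by
  exact Stmt10Aux.stmt10' ρ hρ a φ hφ K hKc hKne hattr hKball hfin a₀ hmax
end
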